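/- arXiv:1908.03209 — 2 statements merged into one kernel-verified Lean document; each statement's English description precedes it below -/
import Mathlib

section
/- States on the 2-shock curve satisfy the Rankine–Hugoniot conditions: if ρ, ρ₀ > 0 with ρ ≠ ρ₀, v = v₀ + sqrt((p(ρ)−p(ρ₀))/(ρρ₀(ρ−ρ₀)))·(ρ−ρ₀), m = ρv, m₀ = ρ₀v₀, then there exists λ ∈ ℝ with λ(ρ−ρ₀) = m−m₀ and λ(m−m₀) = (m²/ρ + p(ρ)) − (m₀²/ρ₀ + p(ρ₀)). -/
theorem two_shock_rankine_hugoniot (γ ρ ρ₀ v₀ : ℝ) (hγ : 1 < γ)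
    (hρ : 0 < ρ) (hρ₀ : 0 < ρ₀) (hne : ρ ≠ ρ₀)
    (p : ℝ → ℝ) (hp : ∀ r, p r = r ^ γ / γ)
    (v m m₀ : ℝ)
    (hv : v = v₀ + Real.sqrt ((p ρ - p ρ₀) / (ρ * ρ₀ * (ρ - ρ₀))) * (ρ - ρ₀))
    (hm : m = ρ * v) (hm₀ : m₀ = ρ₀ * v₀) :
    ∃ lam : ℝ, lam * (ρ - ρ₀) = m - m₀ ∧
      lam * (m - m₀) = (m ^ 2 / ρ + p ρ) - (m₀ ^ 2 / ρ₀ + p ρ₀) := by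
  set s := Real.sqrt ((p ρ - p ρ₀) / (ρ * ρ₀ * (ρ - ρ₀))) with hs
  have hγ0 : (0:ℝ) < γ := by linarith
  have hmono : ∀ a b : ℝ, 0 ≤ a → a < b → p a < p b := by
    intro a b ha hab
    rw [hp, hp]
    exact div_lt_div_of_pos_right (Real.rpow_lt_rpow ha hab hγ0) hγ0
  have hnonneg : 0 ≤ (p ρ - p ρ₀) / (ρ * ρ₀ * (ρ - ρ₀)) := by
    rw [div_nonneg_iff]
    rcases lt_or_gt_of_ne hne with h | h
    · have := hmono ρ ρ₀ hρ.le h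
      right; constructor <;> nlinarith [mul_pos hρ hρ₀]
    · have := hmono ρ₀ ρ hρ₀.le h
      left; constructor
      · linarith
      · nlinarith [mul_pos hρ hρ₀]
  have hs2 : s ^ 2 = (p ρ - p ρ₀) / (ρ * ρ₀ * (ρ - ρ₀)) := Real.sq_sqrt hnonneg
  have hΔ : ρ - ρ₀ ≠ 0 := sub_ne_zero.mpr hne
  have hkey : s ^ 2 * (ρ * ρ₀ * (ρ - ρ₀)) = p ρ - p ρ₀ := by
    rw [hs2]; field_simp
  refine ⟨v₀ + ρ * s, ?_, ?_⟩
  · rw [hm, hm₀, hv]; ring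
  · rw [hm, hm₀, hv]
    field_simp
    linear_combination hkey
end

section
/- Entropy condition for 2-shocks with the mechanical energy: for γ > 1, p(ρ) = ρ^γ/γ, if (ρ₀,v₀) and (ρ,v) with 0 < ρ < ρ₀ are connected by a 2-shock (v − v₀ = sqrt((p(ρ)−p(ρ₀))/(ρρ₀(ρ−ρ₀)))·(ρ−ρ₀)) with shock speed λ = (m − m₀)/(ρ − ρ₀), then λ(η*(u)−η*(u₀)) − (q*(u)−q*(u₀)) ≥ 0, where u = (ρ, ρv), u₀ = (ρ₀, ρ₀v₀). -/
noncomputable def entG (γ x : ℝ) : ℝ :=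
  (γ - 1) * ((1 - x) * (x ^ γ + 1)) / 2 + x ^ γ - x

noncomputable def entPhi (γ x : ℝ) : ℝ :=
  (γ - 1) * ((0 - 1) * (x ^ γ + 1) + (1 - x) * (γ * x ^ (γ - 1))) / 2
    + γ * x ^ (γ - 1) - 1

noncomputable def entPsi (γ x : ℝ) : ℝ :=
  (γ - 1) * ((0 - 1) * (γ * x ^ (γ - 1)) +
      ((0 - 1) * (γ * x ^ (γ - 1)) + (1 - x) * (γ * ((γ - 1) * x ^ (γ - 1 - 1))))) / 2
    + γ * ((γ - 1) * x ^ (γ - 1 - 1))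

lemma entG_hasDerivAt (γ x : ℝ) (hx : 0 < x) :
    HasDerivAt (entG γ) (entPhi γ x) x := by
  have hpow : HasDerivAt (fun y : ℝ => y ^ γ) (γ * x ^ (γ - 1)) x :=
    Real.hasDerivAt_rpow_const (Or.inl hx.ne')
  have hsub : HasDerivAt (fun y : ℝ => 1 - y) (0 - 1) x :=
    (hasDerivAt_const x (1 : ℝ)).sub (hasDerivAt_id' x)
  have h2 := hsub.mul (hpow.add_const 1)
  have h6 := (((h2.const_mul (γ - 1)).div_const 2).add hpow).sub (hasDerivAt_id' x)
  exact h6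

lemma entPhi_hasDerivAt (γ x : ℝ) (hx : 0 < x) :
    HasDerivAt (entPhi γ) (entPsi γ x) x := by
  have hpow : HasDerivAt (fun y : ℝ => y ^ γ) (γ * x ^ (γ - 1)) x :=
    Real.hasDerivAt_rpow_const (Or.inl hx.ne')
  have hpow1 : HasDerivAt (fun y : ℝ => y ^ (γ - 1)) ((γ - 1) * x ^ (γ - 1 - 1)) x :=
    Real.hasDerivAt_rpow_const (Or.inl hx.ne')
  have hsub : HasDerivAt (fun y : ℝ => 1 - y) (0 - 1) x :=
    (hasDerivAt_const x (1 : ℝ)).sub (hasDerivAt_id' x)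
  have pa := (hpow.add_const 1).const_mul (0 - 1 : ℝ)
  have pb1 := hpow1.const_mul γ
  have pb := hsub.mul pb1
  have h6 := ((((pa.add pb).const_mul (γ - 1)).div_const 2).add pb1).sub_const 1
  exact h6

lemma entPsi_nonneg (γ x : ℝ) (hγ : 1 < γ) (hx : 0 < x) (hx1 : x ≤ 1) :
    0 ≤ entPsi γ x := by
  have he : x ^ (γ - 1) = x ^ (γ - 1 - 1) * x := by
    rw [Real.rpow_sub hx (γ - 1) 1, Real.rpow_one]
    field_simp
  have hval : entPsi γ x = γ * (γ - 1) * (γ + 1) * (x ^ (γ - 1 - 1)) * (1 - x) / 2 := by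
    unfold entPsi
    rw [he]; ring
  have hE : 0 < x ^ (γ - 1 - 1) := Real.rpow_pos_of_pos hx _
  have h := mul_nonneg (mul_nonneg (mul_nonneg (mul_nonneg
      (by linarith : (0:ℝ) ≤ γ) (by linarith : (0:ℝ) ≤ γ - 1))
      (by linarith : (0:ℝ) ≤ γ + 1)) hE.le) (by linarith : (0:ℝ) ≤ 1 - x)
  rw [hval]; linarith

lemma entPhi_one (γ : ℝ) : entPhi γ 1 = 0 := by
  simp only [entPhi, Real.one_rpow]; ring

lemma entG_one (γ : ℝ) : entG γ 1 = 0 := by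
  simp only [entG, Real.one_rpow]; ring

lemma entropy_key (γ t : ℝ) (hγ : 1 < γ) (ht : 0 < t) (ht1 : t ≤ 1) :
    0 ≤ (γ - 1) * ((1 - t) * (t ^ γ + 1)) / 2 + t ^ γ - t := by
  have hmem : ∀ x ∈ Set.Icc t 1, 0 < x := fun x hx => lt_of_lt_of_le ht hx.1
  have hmemI : ∀ x ∈ Set.Ioo t 1, 0 < x := fun x hx => lt_trans ht hx.1
  -- φ is monotone on [t,1]
  have hφmono : MonotoneOn (entPhi γ) (Set.Icc t 1) := by
    apply monotoneOn_of_deriv_nonneg (convex_Icc t 1)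
    · exact fun x hx => ((entPhi_hasDerivAt γ x (hmem x hx)).continuousAt).continuousWithinAt
    · rw [interior_Icc]
      exact fun x hx =>
        ((entPhi_hasDerivAt γ x (hmemI x hx)).differentiableAt).differentiableWithinAt
    · rw [interior_Icc]
      intro x hx
      rw [(entPhi_hasDerivAt γ x (hmemI x hx)).deriv]
      exact entPsi_nonneg γ x hγ (hmemI x hx) hx.2.le
  have hφnonpos : ∀ x ∈ Set.Icc t 1, entPhi γ x ≤ 0 := by
    intro x hx
    have := hφmono hx (Set.right_mem_Icc.mpr ht1) hx.2
    rw [entPhi_one] at this; exact this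
  have hganti : AntitoneOn (entG γ) (Set.Icc t 1) := by
    apply antitoneOn_of_deriv_nonpos (convex_Icc t 1)
    · exact fun x hx => ((entG_hasDerivAt γ x (hmem x hx)).continuousAt).continuousWithinAt
    · rw [interior_Icc]
      exact fun x hx =>
        ((entG_hasDerivAt γ x (hmemI x hx)).differentiableAt).differentiableWithinAt
    · rw [interior_Icc]
      intro x hx
      rw [(entG_hasDerivAt γ x (hmemI x hx)).deriv]
      exact hφnonpos x ⟨hx.1.le, hx.2.le⟩
  have h := hganti (Set.left_mem_Icc.mpr ht1) (Set.right_mem_Icc.mpr ht1) ht1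
  rw [entG_one] at h
  simpa [entG] using h

set_option maxHeartbeats 2000000 in
theorem two_shock_entropy_condition (γ ρ ρ₀ v₀ : ℝ) (hγ : 1 < γ)
    (hρ : 0 < ρ) (hρρ₀ : ρ < ρ₀)
    (p : ℝ → ℝ) (hp : ∀ r, p r = r ^ γ / γ)
    (η q : ℝ → ℝ → ℝ)
    (hη : ∀ r m, η r m = m ^ 2 / (2 * r) + r ^ γ / (γ * (γ - 1)))
    (hq : ∀ r m, q r m = m * (m ^ 2 / (2 * r ^ 2) + r ^ (γ - 1) / (γ - 1)))
    (v m m₀ lam : ℝ)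
    (hv : v = v₀ + Real.sqrt ((p ρ - p ρ₀) / (ρ * ρ₀ * (ρ - ρ₀))) * (ρ - ρ₀))
    (hm : m = ρ * v) (hm₀ : m₀ = ρ₀ * v₀)
    (hlam : lam = (m - m₀) / (ρ - ρ₀)) :
    0 ≤ lam * (η ρ m - η ρ₀ m₀) - (q ρ m - q ρ₀ m₀) := by
  have hρ₀ : 0 < ρ₀ := hρ.trans hρρ₀
  have hγ0 : (0:ℝ) < γ := by linarith
  have hγ1 : (0:ℝ) < γ - 1 := by linarith
  have hsub : ρ - ρ₀ < 0 := by linarith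
  have hXlt : ρ ^ γ < ρ₀ ^ γ := Real.rpow_lt_rpow hρ.le hρρ₀ hγ0
  have hA : 0 < (p ρ - p ρ₀) / (ρ * ρ₀ * (ρ - ρ₀)) := by
    rw [hp, hp, div_sub_div_same]
    exact div_pos_of_neg_of_neg
      (div_neg_of_neg_of_pos (sub_neg.mpr hXlt) hγ0)
      (mul_neg_of_pos_of_neg (mul_pos hρ hρ₀) hsub)
  set s := Real.sqrt ((p ρ - p ρ₀) / (ρ * ρ₀ * (ρ - ρ₀))) with hsdef
  have hs0 : 0 ≤ s := Real.sqrt_nonneg _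
  have hs2 : s ^ 2 = (p ρ - p ρ₀) / (ρ * ρ₀ * (ρ - ρ₀)) := Real.sq_sqrt hA.le
  rw [hp, hp] at hs2
  have hrel : ρ ^ γ = ρ₀ ^ γ + s ^ 2 * (γ * (ρ * ρ₀ * (ρ - ρ₀))) := by
    rw [hs2]
    field_simp [hρ.ne', hρ₀.ne', hsub.ne, hγ0.ne']
    ring
  subst hlam hm hm₀ hv
  rw [hη, hη, hq, hq]
  have hp1 : ρ ^ (γ - 1) = ρ ^ γ / ρ := by rw [Real.rpow_sub hρ, Real.rpow_one]
  have hp2 : ρ₀ ^ (γ - 1) = ρ₀ ^ γ / ρ₀ := by rw [Real.rpow_sub hρ₀, Real.rpow_one]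
  rw [hp1, hp2]
  -- key inequality
  have ht : 0 < ρ / ρ₀ := div_pos hρ hρ₀
  have ht1 : ρ / ρ₀ ≤ 1 := by rw [div_le_one hρ₀]; exact hρρ₀.le
  have hkey := entropy_key γ (ρ / ρ₀) hγ ht ht1
  rw [Real.div_rpow hρ.le hρ₀.le] at hkey
  have hY : 0 < ρ₀ ^ γ := Real.rpow_pos_of_pos hρ₀ γ
  have hG : 0 ≤ (γ - 1) * ((ρ₀ - ρ) * (ρ ^ γ + ρ₀ ^ γ)) / 2 + (ρ₀ * ρ ^ γ - ρ * ρ₀ ^ γ) := by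
    have hfac : (γ - 1) * ((ρ₀ - ρ) * (ρ ^ γ + ρ₀ ^ γ)) / 2 + (ρ₀ * ρ ^ γ - ρ * ρ₀ ^ γ)
        = (ρ₀ * ρ₀ ^ γ) *
          ((γ - 1) * ((1 - ρ / ρ₀) * (ρ ^ γ / ρ₀ ^ γ + 1)) / 2 + ρ ^ γ / ρ₀ ^ γ - ρ / ρ₀) := by
      field_simp
      ring
    rw [hfac]
    exact mul_nonneg (by positivity) hkey
  have hF : 0 ≤ (ρ₀ - ρ) * (ρ ^ γ + ρ₀ ^ γ) / (2 * γ)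
      + (ρ₀ * ρ ^ γ - ρ * ρ₀ ^ γ) / (γ * (γ - 1)) := by
    have h1 : (ρ₀ - ρ) * (ρ ^ γ + ρ₀ ^ γ) / (2 * γ)
        + (ρ₀ * ρ ^ γ - ρ * ρ₀ ^ γ) / (γ * (γ - 1))
        = ((γ - 1) * ((ρ₀ - ρ) * (ρ ^ γ + ρ₀ ^ γ)) / 2 + (ρ₀ * ρ ^ γ - ρ * ρ₀ ^ γ))
          / (γ * (γ - 1)) := by
      field_simp
    rw [h1]
    exact div_nonneg hG (by positivity)
  refine le_of_le_of_eq (mul_nonneg hs0 hF) ?_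
  rw [hrel]
  field_simp [hρ.ne', hρ₀.ne', hsub.ne, hγ0.ne', hγ1.ne']
  ring
end
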